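/- Forward-loss decomposition: (i) Σ_{t=m+1}^{T} L_t(x_{t−m},…,x_t) ≤ Σ_{t=m+1}^{T} Z_t(x_t); (ii) for every u ∈ ℝ^d with g_t^i(u) ≤ 0 for all t ∈ {m+1,…,T} and i ∈ {0,…,m}, Σ_{t=m+1}^{T} Z_t(u) = Σ_{t=m+1}^{T} L_t(u,…,u), and consequently Φ(V_T) − Φ(V_m) + Σ_{t=m+1}^{T} [f_t(x_{t−m},…,x_t) − f_t(u,…,u)] ≤ Σ_{t=m+1}^{T} [Z_t(x_t) − Z_t(u)] + G·(m+1)·Φ′(V_T). -/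

import Mathlib

lemma fld_reindex (m T : ℕ) (hT : m + 1 ≤ T) (h : ℕ → ℕ → ℝ)
    (h0 : ∀ t i, T < t ∨ t - i ≤ m → h t i = 0) :
    ∑ t ∈ Finset.Icc (m + 1) T, ∑ i ∈ Finset.range (m + 1), h t i
      = ∑ t ∈ Finset.Icc (m + 1) T, ∑ i ∈ Finset.range (m + 1), h (t + i) i := by
  rw [Finset.sum_comm, Finset.sum_comm (s := Finset.Icc (m + 1) T)]
  refine Finset.sum_congr rfl fun i hi => ?_
  rw [Finset.mem_range] at hi
  have h1 : ∑ t ∈ Finset.Icc (m + 1) T, h t i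
      = ∑ t ∈ Finset.Icc (m + 1 + i) T, h t i := by
    refine (Finset.sum_subset (Finset.Icc_subset_Icc_left (by omega)) ?_).symm
    intro t ht ht'
    rw [Finset.mem_Icc] at ht
    rw [Finset.mem_Icc] at ht'
    exact h0 t i (Or.inr (by omega))
  have h2 : ∑ t ∈ Finset.Icc (m + 1) T, h (t + i) i
      = ∑ t ∈ Finset.Icc (m + 1) (T - i), h (t + i) i := by
    refine (Finset.sum_subset (Finset.Icc_subset_Icc_right (by omega)) ?_).symm
    intro t ht ht'
    rw [Finset.mem_Icc] at ht
    rw [Finset.mem_Icc] at ht'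
    exact h0 (t + i) i (Or.inl (by omega))
  rw [h1, h2]
  have hmap : Finset.Icc (m + 1 + i) T
      = (Finset.Icc (m + 1) (T - i)).map (addRightEmbedding i) := by
    rw [Finset.map_add_right_Icc]
    congr 1
    omega
  rw [hmap, Finset.sum_map]
  rfl

lemma fld_Vmono (m T : ℕ) (V : ℕ → ℝ) (W : ℕ → ℝ) (hW : ∀ t, 0 ≤ W t)
    (hV0 : ∀ t ≤ m, V t = 0)
    (hVrec : ∀ t, m + 1 ≤ t → t ≤ T → V t = V (t - 1) + W t) :
    ∀ t ≤ T, ∀ s ≤ t, V s ≤ V t := by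
  intro t
  induction t with
  | zero => intro _ s hs; interval_cases s; exact le_refl _
  | succ n ih =>
    intro hn s hs
    rcases Nat.lt_succ_iff_lt_or_eq.mp (Nat.lt_succ_of_le hs) with h | h
    · by_cases hc : n + 1 ≤ m
      · rw [hV0 s (by omega), hV0 (n + 1) hc]
      · have hrec := hVrec (n + 1) (by omega) hn
        simp only [Nat.add_sub_cancel] at hrec
        rw [hrec]
        have h1 := ih (by omega) s (by omega)
        have h2 := hW (n + 1)
        linarith
    · subst h; exact le_refl _

lemma fld_mvt (Φ Φ' : ℝ → ℝ)
    (hderiv : ∀ v ∈ Set.Ici (0:ℝ), HasDerivAt Φ (Φ' v) v)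
    (hmono : MonotoneOn Φ' (Set.Ici 0)) (a b : ℝ) (ha : 0 ≤ a) (hab : a ≤ b) :
    Φ b - Φ a ≤ Φ' b * (b - a) := by
  rcases eq_or_lt_of_le hab with rfl | hlt
  · simp
  · have hcont : ContinuousOn Φ (Set.Icc a b) := fun y hy =>
      ((hderiv y (le_trans ha hy.1)).continuousAt).continuousWithinAt
    obtain ⟨c, hc, hceq⟩ := exists_hasDerivAt_eq_slope Φ Φ' hlt hcont
      (fun y hy => hderiv y (le_trans ha hy.1.le))
    have hc0 : (0:ℝ) ≤ c := le_trans ha hc.1.le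
    have hcb : Φ' c ≤ Φ' b := hmono hc0 (le_trans ha hab) hc.2.le
    have hba : (0:ℝ) < b - a := by linarith
    have heq : Φ b - Φ a = Φ' c * (b - a) := by
      field_simp at hceq; linarith [hceq]
    rw [heq]
    exact mul_le_mul_of_nonneg_right hcb hba.le


/-- Forward-loss decomposition under separability:
(i) `Σ_{t=m+1}^T L_t(x_{t−m},…,x_t) ≤ Σ_{t=m+1}^T Z_t(x_t)`;
(ii) for every `u` with `g_t^i(u) ≤ 0` for all `t, i`,
`Σ Z_t(u) = Σ L_t(u,…,u)` and consequently
`Φ(V_T) − Φ(V_m) + Σ [f_t(x_{t−m},…,x_t) − f_t(u,…,u)]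
  ≤ Σ [Z_t(x_t) − Z_t(u)] + G·(m+1)·Φ′(V_T)`. -/
theorem forward_loss_decomposition
    (d m T : ℕ) (hd : 0 < d) (hm : 0 < m) (hT : m + 1 ≤ T)
    -- arbitrary decisions
    (x : ℕ → EuclideanSpace ℝ (Fin d))
    (f g : ℕ → (Fin (m + 1) → EuclideanSpace ℝ (Fin d)) → ℝ)
    (G : ℝ) (hG : 0 ≤ G)
    -- 0 ≤ g_t⁺ ≤ G pointwise
    (hgbd : ∀ t z, max (g t z) 0 ≤ G)
    -- convention: f_t = 0 and g_t = 0 outside {m+1,…,T}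
    (hf0 : ∀ t, t ≤ m ∨ T < t → ∀ z, f t z = 0)
    (hg0 : ∀ t, t ≤ m ∨ T < t → ∀ z, g t z = 0)
    -- cumulative violation
    (V : ℕ → ℝ)
    (hV0 : ∀ t ≤ m, V t = 0)
    (hVrec : ∀ t, m + 1 ≤ t → t ≤ T →
      V t = V (t - 1) + max (g t (fun i => x (t - m + (i : ℕ)))) 0)
    -- penalty function: convex, differentiable, Φ′ nonnegative and nondecreasing
    (Φ Φ' : ℝ → ℝ)
    (hΦconv : ConvexOn ℝ (Set.Ici 0) Φ)
    (hΦderiv : ∀ v ∈ Set.Ici (0:ℝ), HasDerivAt Φ (Φ' v) v)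
    (hΦ'nonneg : ∀ v ∈ Set.Ici (0:ℝ), 0 ≤ Φ' v)
    (hΦ'mono : MonotoneOn Φ' (Set.Ici 0))
    (hΦnonneg : ∀ v ∈ Set.Ici (0:ℝ), 0 ≤ Φ v)
    -- memory-based surrogate losses
    (L : ℕ → (Fin (m + 1) → EuclideanSpace ℝ (Fin d)) → ℝ)
    (hL : ∀ t z, L t z = f t z + Φ' (V (t - m - 1)) * max (g t z) 0)
    -- separable components: the i-th component acts on the decision made
    -- i rounds before t (coordinate m−i of the tuple)
    (fi gi : ℕ → ℕ → EuclideanSpace ℝ (Fin d) → ℝ)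
    (hsepf : ∀ t, ∀ z : Fin (m + 1) → EuclideanSpace ℝ (Fin d),
      f t z = ∑ i ∈ Finset.range (m + 1),
        fi t i (z ⟨m - i, Nat.lt_succ_of_le (Nat.sub_le m i)⟩))
    (hsepg : ∀ t, ∀ z : Fin (m + 1) → EuclideanSpace ℝ (Fin d),
      g t z = ∑ i ∈ Finset.range (m + 1),
        gi t i (z ⟨m - i, Nat.lt_succ_of_le (Nat.sub_le m i)⟩))
    -- convention: components vanish when t ≤ m, t > T, or t − i ≤ m
    (hfi0 : ∀ t i, t ≤ m ∨ T < t ∨ t - i ≤ m → ∀ y, fi t i y = 0)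
    (hgi0 : ∀ t i, t ≤ m ∨ T < t ∨ t - i ≤ m → ∀ y, gi t i y = 0)
    -- forward losses
    (Z : ℕ → EuclideanSpace ℝ (Fin d) → ℝ)
    (hZ : ∀ t y, Z t y = ∑ i ∈ Finset.range (m + 1),
      (fi (t + i) i y + Φ' (V (t - m - 1 + i)) * max (gi (t + i) i y) 0)) :
    (∑ t ∈ Finset.Icc (m + 1) T, L t (fun i => x (t - m + (i : ℕ)))
        ≤ ∑ t ∈ Finset.Icc (m + 1) T, Z t (x t)) ∧
    (∀ u : EuclideanSpace ℝ (Fin d),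
      (∀ t ∈ Finset.Icc (m + 1) T, ∀ i ∈ Finset.range (m + 1), gi t i u ≤ 0) →
      (∑ t ∈ Finset.Icc (m + 1) T, Z t u
          = ∑ t ∈ Finset.Icc (m + 1) T, L t (fun _ => u)) ∧
      (Φ (V T) - Φ (V m)
          + ∑ t ∈ Finset.Icc (m + 1) T,
              (f t (fun i => x (t - m + (i : ℕ))) - f t (fun _ => u))
        ≤ ∑ t ∈ Finset.Icc (m + 1) T, (Z t (x t) - Z t u)
            + G * (m + 1) * Φ' (V T))) := by
  classical
  set S := Finset.Icc (m + 1) T with hSdef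
  set W : ℕ → ℝ := fun t => max (g t (fun i => x (t - m + (i : ℕ)))) 0 with hWdef
  have hWnn : ∀ t, 0 ≤ W t := fun t => le_max_right _ _
  have hWG : ∀ t, W t ≤ G := fun t => hgbd t _
  have hVmono : ∀ t ≤ T, ∀ s ≤ t, V s ≤ V t :=
    fld_Vmono m T V W hWnn hV0 hVrec
  have hVnn : ∀ t ≤ T, (0:ℝ) ≤ V t := by
    intro t ht
    have h0 := hV0 0 (Nat.zero_le m)
    have := hVmono t ht 0 (Nat.zero_le t)
    linarith
  -- pointwise rewriting of f and g at the decision tuple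
  have hsum_f : ∀ t, m + 1 ≤ t → f t (fun i => x (t - m + (i : ℕ)))
      = ∑ i ∈ Finset.range (m + 1), fi t i (x (t - i)) := by
    intro t ht
    rw [hsepf]
    refine Finset.sum_congr rfl fun i hi => ?_
    rw [Finset.mem_range] at hi
    exact congrArg (fun n => fi t i (x n)) (by omega : t - m + (m - i) = t - i)
  have hsum_g : ∀ t, m + 1 ≤ t → g t (fun i => x (t - m + (i : ℕ)))
      = ∑ i ∈ Finset.range (m + 1), gi t i (x (t - i)) := by
    intro t ht
    rw [hsepg]
    refine Finset.sum_congr rfl fun i hi => ?_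
    rw [Finset.mem_range] at hi
    exact congrArg (fun n => gi t i (x n)) (by omega : t - m + (m - i) = t - i)
  -- the per-term forward summand
  set H : ℕ → ℕ → ℝ := fun t i =>
    fi t i (x (t - i)) + Φ' (V (t - m - 1)) * max (gi t i (x (t - i))) 0 with hHdef
  have hH0 : ∀ t i, T < t ∨ t - i ≤ m → H t i = 0 := by
    intro t i hti
    have hcond : t ≤ m ∨ T < t ∨ t - i ≤ m := by tauto
    simp only [hHdef, hfi0 t i hcond, hgi0 t i hcond, max_self, mul_zero, add_zero]
  have hHZ : ∀ t ∈ S, ∑ i ∈ Finset.range (m + 1), H (t + i) i = Z t (x t) := by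
    intro t ht
    rw [hSdef, Finset.mem_Icc] at ht
    rw [hZ]
    refine Finset.sum_congr rfl fun i hi => ?_
    simp only [hHdef]
    have e1 : t + i - i = t := by omega
    have e2 : t + i - m - 1 = t - m - 1 + i := by omega
    rw [e1, e2]
  have hLH : ∀ t ∈ S, L t (fun i => x (t - m + (i : ℕ)))
      ≤ ∑ i ∈ Finset.range (m + 1), H t i := by
    intro t ht
    rw [hSdef, Finset.mem_Icc] at ht
    rw [hL, hsum_f t ht.1, hsum_g t ht.1]
    simp only [hHdef]
    rw [Finset.sum_add_distrib, ← Finset.mul_sum]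
    refine add_le_add le_rfl (mul_le_mul_of_nonneg_left ?_ ?_)
    · refine max_le (Finset.sum_le_sum fun i _ => le_max_left _ _)
        (Finset.sum_nonneg fun i _ => le_max_right _ _)
    · exact hΦ'nonneg _ (hVnn _ (by omega))
  have part1 : ∑ t ∈ S, L t (fun i => x (t - m + (i : ℕ))) ≤ ∑ t ∈ S, Z t (x t) := by
    calc ∑ t ∈ S, L t (fun i => x (t - m + (i : ℕ)))
        ≤ ∑ t ∈ S, ∑ i ∈ Finset.range (m + 1), H t i := Finset.sum_le_sum hLH
      _ = ∑ t ∈ S, ∑ i ∈ Finset.range (m + 1), H (t + i) i :=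
          fld_reindex m T hT H hH0
      _ = ∑ t ∈ S, Z t (x t) := Finset.sum_congr rfl hHZ
  refine ⟨part1, fun u hu => ?_⟩
  -- part (ii)
  have hmaxu : ∀ t ∈ S, ∀ i ∈ Finset.range (m + 1),
      max (gi (t + i) i u) 0 = 0 := by
    intro t ht i hi
    rw [hSdef, Finset.mem_Icc] at ht
    by_cases hc : T < t + i
    · rw [hgi0 (t + i) i (Or.inr (Or.inl hc)), max_self]
    · have hmem : t + i ∈ S := by rw [hSdef, Finset.mem_Icc]; omega
      exact max_eq_right (hu (t + i) hmem i hi)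
  have hZu : ∀ t ∈ S, Z t u = ∑ i ∈ Finset.range (m + 1), fi (t + i) i u := by
    intro t ht
    rw [hZ]
    refine Finset.sum_congr rfl fun i hi => ?_
    rw [hmaxu t ht i hi, mul_zero, add_zero]
  have hLu : ∀ t ∈ S, L t (fun _ => u) = ∑ i ∈ Finset.range (m + 1), fi t i u := by
    intro t ht
    rw [hSdef, Finset.mem_Icc] at ht
    have hgu : g t (fun _ => u) ≤ 0 := by
      rw [hsepg]
      refine Finset.sum_nonpos fun i hi => ?_
      exact hu t (by rw [hSdef, Finset.mem_Icc]; omega) i hi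
    rw [hL, max_eq_right hgu, mul_zero, add_zero, hsepf]
  have hfieq : ∑ t ∈ S, ∑ i ∈ Finset.range (m + 1), fi t i u
      = ∑ t ∈ S, ∑ i ∈ Finset.range (m + 1), fi (t + i) i u := by
    refine fld_reindex m T hT (fun t i => fi t i u) ?_
    intro t i hti
    exact hfi0 t i (by tauto) u
  have part2eq : ∑ t ∈ S, Z t u = ∑ t ∈ S, L t (fun _ => u) := by
    rw [Finset.sum_congr rfl hZu, ← hfieq, Finset.sum_congr rfl hLu]
  refine ⟨part2eq, ?_⟩
  -- telescoping bound for Φ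
  have htel : Φ (V T) - Φ (V m)
      = ∑ t ∈ S, (Φ (V t) - Φ (V (t - 1))) := by
    have key : ∀ n : ℕ, m + n ≤ T →
        Φ (V (m + n)) - Φ (V m)
          = ∑ t ∈ Finset.Icc (m + 1) (m + n), (Φ (V t) - Φ (V (t - 1))) := by
      intro n
      induction n with
      | zero => intro _; simp
      | succ k ih =>
        intro hk
        have h1 : m + (k + 1) = (m + k) + 1 := by omega
        rw [h1, Finset.sum_Icc_succ_top (by omega), ← ih (by omega)]
        have h2 : m + k + 1 - 1 = m + k := by omega
        rw [h2]
        ring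
    have := key (T - m) (by omega)
    have hTm : m + (T - m) = T := by omega
    rw [hTm] at this
    rw [hSdef, this]
  have hstep : ∀ t ∈ S, Φ (V t) - Φ (V (t - 1)) ≤ Φ' (V t) * W t := by
    intro t ht
    rw [hSdef, Finset.mem_Icc] at ht
    have hrec := hVrec t ht.1 ht.2
    have hWt : W t = max (g t (fun i => x (t - m + (i : ℕ)))) 0 := rfl
    rw [← hWt] at hrec
    have hab : V (t - 1) ≤ V t := by
      have := hWnn t; rw [hrec]; linarith
    have hbnd := fld_mvt Φ Φ' hΦderiv hΦ'mono (V (t - 1)) (V t)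
      (hVnn (t - 1) (by omega)) hab
    have hdiff : V t - V (t - 1) = W t := by rw [hrec]; ring
    rw [hdiff] at hbnd
    exact hbnd
  have hΦ'T : ∀ t ≤ T, Φ' (V t) ≤ Φ' (V T) := fun t ht =>
    hΦ'mono (hVnn t ht) (hVnn T le_rfl) (hVmono T le_rfl t ht)
  have hstep2 : ∀ t ∈ S, Φ' (V t) * W t
      ≤ Φ' (V (t - m - 1)) * W t + (Φ' (V t) - Φ' (V (t - m - 1))) * G := by
    intro t ht
    rw [hSdef, Finset.mem_Icc] at ht
    have hd1 : Φ' (V (t - m - 1)) ≤ Φ' (V t) :=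
      hΦ'mono (hVnn _ (by omega)) (hVnn _ (by omega))
        (hVmono t (by omega) (t - m - 1) (by omega))
    have hkey : (Φ' (V t) - Φ' (V (t - m - 1))) * W t
        ≤ (Φ' (V t) - Φ' (V (t - m - 1))) * G :=
      mul_le_mul_of_nonneg_left (hWG t) (by linarith)
    have hid : Φ' (V t) * W t
        = Φ' (V (t - m - 1)) * W t + (Φ' (V t) - Φ' (V (t - m - 1))) * W t := by
      ring
    linarith
  -- the set-difference bound
  have hsumdiff : ∑ t ∈ S, (Φ' (V t) - Φ' (V (t - m - 1)))
      ≤ (m + 1 : ℝ) * Φ' (V T) := by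
    rw [Finset.sum_sub_distrib]
    set S2 := Finset.Icc 0 (T - m - 1) with hS2def
    have hB : ∑ t ∈ S, Φ' (V (t - m - 1)) = ∑ s ∈ S2, Φ' (V s) := by
      have hmap : S = S2.map (addRightEmbedding (m + 1)) := by
        rw [hS2def, Finset.map_add_right_Icc, hSdef]
        congr 1 <;> omega
      rw [hmap, Finset.sum_map]
      refine Finset.sum_congr rfl fun s hs => ?_
      have : (addRightEmbedding (m + 1)) s - m - 1 = s := by
        simp [addRightEmbedding]; omega
      rw [this]
    rw [hB]
    have e1 := Finset.sum_inter_add_sum_sdiff S S2 (fun t => Φ' (V t))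
    have e2 := Finset.sum_inter_add_sum_sdiff S2 S (fun t => Φ' (V t))
    have e3 : ∑ t ∈ S ∩ S2, Φ' (V t) = ∑ t ∈ S2 ∩ S, Φ' (V t) := by
      rw [Finset.inter_comm]
    have hnn2 : (0:ℝ) ≤ ∑ t ∈ S2 \ S, Φ' (V t) := by
      refine Finset.sum_nonneg fun t ht => ?_
      have ht' := Finset.mem_sdiff.mp ht
      have := Finset.mem_Icc.mp ht'.1
      exact hΦ'nonneg _ (hVnn t (by omega))
    have hcard : (S \ S2).card ≤ m + 1 := by
      have hsub : S \ S2 ⊆ Finset.Icc (T - m) T := by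
        intro t ht
        have ht' := Finset.mem_sdiff.mp ht
        have h1 := Finset.mem_Icc.mp ht'.1
        have h2 : ¬ (0 ≤ t ∧ t ≤ T - m - 1) := by
          intro hc; exact ht'.2 (Finset.mem_Icc.mpr hc)
        rw [Finset.mem_Icc]
        omega
      calc (S \ S2).card ≤ (Finset.Icc (T - m) T).card := Finset.card_le_card hsub
        _ = T + 1 - (T - m) := Nat.card_Icc _ _
        _ ≤ m + 1 := by omega
    have htop : ∑ t ∈ S \ S2, Φ' (V t) ≤ (m + 1 : ℝ) * Φ' (V T) := by
      have h1 : ∑ t ∈ S \ S2, Φ' (V t) ≤ (S \ S2).card • Φ' (V T) := by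
        refine Finset.sum_le_card_nsmul _ _ _ fun t ht => ?_
        have ht' := Finset.mem_sdiff.mp ht
        have := Finset.mem_Icc.mp ht'.1
        exact hΦ'T t (by omega)
      rw [nsmul_eq_mul] at h1
      refine le_trans h1 (mul_le_mul_of_nonneg_right ?_ (hΦ'nonneg _ (hVnn T le_rfl)))
      exact_mod_cast hcard
    linarith
  -- assemble
  have hLx : ∑ t ∈ S, L t (fun i => x (t - m + (i : ℕ)))
      = ∑ t ∈ S, f t (fun i => x (t - m + (i : ℕ)))
        + ∑ t ∈ S, Φ' (V (t - m - 1)) * W t := by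
    rw [← Finset.sum_add_distrib]
    exact Finset.sum_congr rfl fun t ht => hL t _
  have hsum1 : ∑ t ∈ S, (Φ (V t) - Φ (V (t - 1)))
      ≤ ∑ t ∈ S, Φ' (V t) * W t := Finset.sum_le_sum hstep
  have hsum2 : ∑ t ∈ S, Φ' (V t) * W t
      ≤ ∑ t ∈ S, Φ' (V (t - m - 1)) * W t
        + (∑ t ∈ S, (Φ' (V t) - Φ' (V (t - m - 1)))) * G := by
    rw [Finset.sum_mul, ← Finset.sum_add_distrib]
    exact Finset.sum_le_sum hstep2
  have hBsum : ∑ t ∈ S, Z t u = ∑ t ∈ S, f t (fun _ => u) := by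
    rw [part2eq]
    refine Finset.sum_congr rfl fun t ht => ?_
    rw [hLu t ht, hsepf]
  have hGdiff : (∑ t ∈ S, (Φ' (V t) - Φ' (V (t - m - 1)))) * G
      ≤ G * (m + 1) * Φ' (V T) := by
    have h1 : (∑ t ∈ S, (Φ' (V t) - Φ' (V (t - m - 1)))) * G
        ≤ ((m + 1 : ℝ) * Φ' (V T)) * G :=
      mul_le_mul_of_nonneg_right hsumdiff hG
    calc (∑ t ∈ S, (Φ' (V t) - Φ' (V (t - m - 1)))) * G
        ≤ ((m + 1 : ℝ) * Φ' (V T)) * G := h1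
      _ = G * (m + 1) * Φ' (V T) := by ring
  rw [Finset.sum_sub_distrib, Finset.sum_sub_distrib]
  push_cast
  rw [htel]
  linarith [part1, hsum1, hsum2, hGdiff, hLx, hBsum]
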